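/- Let μ be a compactly supported probability measure on ℝ^d with μ(B(x,r)) ≲ r^s for all x ∈ ℝ^d and r > 0. Then for every f ∈ L²(μ) and every R ≥ 1, one has ∫_{|ξ| ≤ R} |\widehat{f dμ}(ξ)|² dξ ≲ R^{d−s} ‖f‖²_{L²(μ)}, where the implicit constant depends only on d, s, and the Frostman constant of μ. -/

import Mathlib

open MeasureTheory Metric Set Matrix
open scoped RealInnerProductSpace ENNReal FourierTransform

/-- e^{2πit} -/
noncomputable def ePi (t : ℝ) : ℂ := Complex.exp (2 * Real.pi * Complex.I * t)

/-- Fourier transform of the measure `f dμ`. -/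
noncomputable def ftM {d : ℕ} (μ : Measure (EuclideanSpace ℝ (Fin d)))
    (f : EuclideanSpace ℝ (Fin d) → ℂ) (ξ : EuclideanSpace ℝ (Fin d)) : ℂ :=
  ∫ x, ePi (-⟪x, ξ⟫) * f x ∂μ

lemma ePi_norm (t : ℝ) : ‖ePi t‖ = 1 := by
  simp [ePi, Complex.norm_exp]

lemma ePi_conj (t : ℝ) : (starRingEnd ℂ) (ePi t) = ePi (-t) := by
  rw [ePi, ePi, ← Complex.exp_conj]
  congr 1
  simp only [_root_.map_mul, Complex.conj_I, Complex.conj_ofNat, Complex.conj_ofReal]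
  push_cast
  ring

lemma ePi_continuous : Continuous ePi := by
  unfold ePi; fun_prop

lemma ftM_norm_le {d : ℕ} (μ : Measure (EuclideanSpace ℝ (Fin d)))
    (f : EuclideanSpace ℝ (Fin d) → ℂ) (ξ : EuclideanSpace ℝ (Fin d)) :
    ‖ftM μ f ξ‖ ≤ ∫ x, ‖f x‖ ∂μ := by
  refine (norm_integral_le_integral_norm _).trans_eq ?_
  refine integral_congr_ae (Filter.Eventually.of_forall fun x => ?_)
  simp only [norm_mul, ePi_norm, one_mul]

lemma ftM_continuous {d : ℕ} (μ : Measure (EuclideanSpace ℝ (Fin d)))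
    {f : EuclideanSpace ℝ (Fin d) → ℂ} (hf : Integrable f μ) :
    Continuous (ftM μ f) := by
  apply continuous_of_dominated (bound := fun x => ‖f x‖)
  · intro ξ
    exact ((ePi_continuous.comp ((continuous_inner.comp (Continuous.prodMk continuous_id continuous_const)).neg)).aestronglyMeasurable).mul hf.1
  · intro ξ
    exact Filter.Eventually.of_forall fun x => by rw [norm_mul, ePi_norm, one_mul]
  · exact hf.norm
  · exact Filter.Eventually.of_forall fun x =>
      (ePi_continuous.comp ((continuous_inner.comp (Continuous.prodMk continuous_const continuous_id)).neg)).mul continuous_const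

-- log bound : (log (1/t))^(s/2) ≤ s^(s/2) * t^(-(1/2)) for 0 < t ≤ 1
lemma log_pow_bound {s t : ℝ} (hs0 : 0 < s) (ht0 : 0 < t) (ht1 : t ≤ 1) :
    (Real.log (1/t)) ^ (s/2) ≤ s ^ (s/2) * t ^ (-(1/2) : ℝ) := by
  have h1 : Real.log (1/t) ≤ s * t ^ (-(1/s) : ℝ) := by
    have := Real.log_le_rpow_div (x := 1/t) (by positivity) (one_div_pos.2 hs0)
    calc Real.log (1/t) ≤ (1/t) ^ ((1:ℝ)/s) / (1/s) := this
      _ = s * t ^ (-(1/s) : ℝ) := by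
          rw [div_div_eq_mul_div, div_one, one_div t, ← Real.rpow_neg_one t,
            ← Real.rpow_mul ht0.le]
          ring_nf
  have hL0 : 0 ≤ Real.log (1/t) := Real.log_nonneg (by
    rw [le_div_iff₀ ht0]; simpa using ht1)
  calc (Real.log (1/t)) ^ (s/2) ≤ (s * t ^ (-(1/s):ℝ)) ^ (s/2) :=
        Real.rpow_le_rpow hL0 h1 (by positivity)
    _ = s ^ (s/2) * t ^ (-(1/2) : ℝ) := by
        rw [Real.mul_rpow hs0.le (by positivity), ← Real.rpow_mul ht0.le]
        congr 2
        field_simp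

lemma kernel_bound (d : ℕ) (s : ℝ) (hs0 : 0 < s)
    (μ : Measure (EuclideanSpace ℝ (Fin d))) [IsProbabilityMeasure μ]
    (C : ℝ) (hC : 0 < C)
    (hfr : ∀ (x : EuclideanSpace ℝ (Fin d)) (r : ℝ), 0 < r →
      (μ (closedBall x r)).toReal ≤ C * r ^ s)
    (R : ℝ) (hR : 1 ≤ R) (x : EuclideanSpace ℝ (Fin d)) :
    ∫ y, Real.exp (-(Real.pi * R^2) * ‖x - y‖^2) ∂μ ≤ (2 * C * s^(s/2)) * R^(-s) := by
  have hR0 : (0:ℝ) < R := lt_of_lt_of_le one_pos hR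
  set a : ℝ := Real.pi * R^2 with ha_def
  have ha : 0 < a := by positivity
  set g : EuclideanSpace ℝ (Fin d) → ℝ := fun y => Real.exp (-a * ‖x - y‖^2) with hg_def
  have hg_cont : Continuous g := by
    apply Real.continuous_exp.comp
    exact (continuous_const.mul (((continuous_const.sub continuous_id).norm).pow 2))
  have hg_le_one : ∀ y, g y ≤ 1 := fun y => Real.exp_le_one_iff.2 (by
    have : (0:ℝ) ≤ a * ‖x - y‖^2 := by positivity
    linarith)
  have hg_nn : ∀ y, 0 ≤ g y := fun y => (Real.exp_pos _).le
  have hg_int : Integrable g μ := by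
    refine (integrable_const (1:ℝ)).mono' hg_cont.aestronglyMeasurable ?_
    exact Filter.Eventually.of_forall fun y => by
      rw [Real.norm_eq_abs, abs_of_nonneg (hg_nn y)]; exact hg_le_one y
  rw [hg_int.integral_eq_integral_meas_lt (Filter.Eventually.of_forall hg_nn)]
  -- bound the layer cake integral
  set c : ℝ := C * s^(s/2) * R^(-s) with hc_def
  have hc : 0 < c := by positivity
  set H : ℝ → ℝ := Set.indicator (Ioc (0:ℝ) 1) (fun t => c * t ^ (-(1/2) : ℝ)) with hH_def
  have hH_int : Integrable H ((volume : Measure ℝ).restrict (Ioi 0)) := by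
    rw [hH_def, integrable_indicator_iff measurableSet_Ioc]
    unfold IntegrableOn
    rw [Measure.restrict_restrict measurableSet_Ioc, inter_eq_left.2 (fun t ht => ht.1)]
    refine Integrable.const_mul ?_ c
    exact (intervalIntegral.intervalIntegrable_rpow' (by norm_num)).1
  have key : ∀ t ∈ Ioi (0:ℝ), (μ {y | t < g y}).toReal ≤ H t := by
    intro t ht
    simp only [mem_Ioi] at ht
    by_cases ht1 : t ≤ 1
    · by_cases ht1' : t < 1
      · -- 0 < t < 1 : set is inside a closed ball
        have hlog : 0 < Real.log (1/t) := Real.log_pos (by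
          rw [lt_div_iff₀ ht]; simpa using ht1')
        set ρ : ℝ := Real.sqrt (Real.log (1/t) / a) with hρ_def
        have hρ : 0 < ρ := Real.sqrt_pos.2 (by positivity)
        have hsub : {y | t < g y} ⊆ closedBall x ρ := by
          intro y hy
          simp only [mem_setOf_eq, hg_def] at hy
          have h2 : Real.log t < -a * ‖x - y‖^2 := by
            have := Real.log_lt_log ht hy
            rwa [Real.log_exp] at this
          have h3 : a * ‖x - y‖^2 < Real.log (1/t) := by
            rw [one_div, Real.log_inv]; linarith
          have h4 : ‖x - y‖^2 < Real.log (1/t) / a := by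
            rw [lt_div_iff₀ ha]; linarith [h3]
          have h5 : ‖x - y‖ ≤ ρ := by
            rw [hρ_def]
            have := Real.sqrt_le_sqrt h4.le
            rwa [Real.sqrt_sq (norm_nonneg _)] at this
          rw [mem_closedBall, dist_eq_norm, ← norm_neg]
          simpa [neg_sub] using h5
        have h6 : (μ {y | t < g y}).toReal ≤ (μ (closedBall x ρ)).toReal :=
          ENNReal.toReal_mono (measure_ne_top μ _) (measure_mono hsub)
        have h7 := hfr x ρ hρ
        have hLnn : (0:ℝ) ≤ Real.log (1/t) / a := by positivity
        have h8 : ρ ^ s ≤ (Real.log (1/t))^(s/2) * R^(-s) := by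
          rw [hρ_def, Real.sqrt_eq_rpow, ← Real.rpow_mul hLnn,
            show (1:ℝ)/2 * s = s/2 by ring, Real.div_rpow hlog.le ha.le]
          have hRs : R^s ≤ a^(s/2) := by
            have h9 : R^s = (R^2 : ℝ)^(s/2) := by
              rw [← Real.rpow_natCast R 2, ← Real.rpow_mul hR0.le]
              congr 1
              ring
            rw [h9]
            refine Real.rpow_le_rpow (by positivity) ?_ (by positivity)
            rw [ha_def]
            nlinarith [Real.pi_gt_three, sq_nonneg R]
          calc Real.log (1/t) ^ (s/2) / a ^ (s/2)
              ≤ Real.log (1/t) ^ (s/2) / R^s := by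
                apply div_le_div_of_nonneg_left (by positivity) (by positivity) hRs
            _ = Real.log (1/t) ^ (s/2) * R^(-s) := by
                rw [Real.rpow_neg hR0.le, div_eq_mul_inv]
        calc (μ {y | t < g y}).toReal ≤ C * ρ ^ s := h6.trans h7
          _ ≤ C * ((Real.log (1/t))^(s/2) * R^(-s)) :=
              mul_le_mul_of_nonneg_left h8 hC.le
          _ ≤ C * ((s^(s/2) * t ^ (-(1/2):ℝ)) * R^(-s)) := by
              refine mul_le_mul_of_nonneg_left ?_ hC.le
              exact mul_le_mul_of_nonneg_right (log_pow_bound hs0 ht ht1) (by positivity)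
          _ = c * t ^ (-(1/2):ℝ) := by rw [hc_def]; ring
          _ = H t := by rw [hH_def, Set.indicator_of_mem (Set.mem_Ioc.mpr ⟨ht, ht1⟩)]
      · -- t = 1
        have : {y | t < g y} = ∅ := by
          ext y; simp only [mem_setOf_eq, mem_empty_iff_false, iff_false, not_lt]
          exact (hg_le_one y).trans (not_lt.1 ht1')
        rw [this]
        simp only [measure_empty, ENNReal.toReal_zero]
        exact Set.indicator_nonneg (fun u hu => mul_nonneg hc.le (Real.rpow_nonneg hu.1.le _)) t
    · -- t > 1 : empty set, H t = 0
      have : {y | t < g y} = ∅ := by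
        ext y; simp only [mem_setOf_eq, mem_empty_iff_false, iff_false, not_lt]
        exact (hg_le_one y).trans (lt_of_not_ge ht1).le
      rw [this, hH_def, Set.indicator_of_notMem (fun hmem => ht1 hmem.2)]
      simp
  refine le_trans (integral_mono_of_nonneg
    (Filter.Eventually.of_forall fun t => ENNReal.toReal_nonneg) hH_int
    ((ae_restrict_iff' measurableSet_Ioi).2 (Filter.Eventually.of_forall key))) ?_
  rw [hH_def, integral_indicator measurableSet_Ioc,
    Measure.restrict_restrict measurableSet_Ioc, inter_eq_left.2 (fun u hu => hu.1),
    MeasureTheory.integral_const_mul]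
  have hval : ∫ u in Ioc (0:ℝ) 1, u ^ (-(1/2):ℝ) = 2 := by
    rw [← intervalIntegral.integral_of_le zero_le_one,
      integral_rpow (Or.inl (by norm_num))]
    rw [Real.zero_rpow (by norm_num), Real.one_rpow]
    norm_num
  rw [hval, hc_def]
  ring_nf
  exact le_refl _

lemma gauss_ft (d : ℕ) (R : ℝ) (hR0 : 0 < R) (z : EuclideanSpace ℝ (Fin d)) :
    ∫ ξ : EuclideanSpace ℝ (Fin d), Complex.exp (↑(-2 * Real.pi * ⟪ξ, z⟫) * Complex.I) *
      Complex.exp (-(↑(Real.pi / R^2) : ℂ) * ‖ξ‖^2) =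
    ((R ^ (d:ℝ) * Real.exp (-(Real.pi * R^2) * ‖z‖^2) : ℝ) : ℂ) := by
  have hb : 0 < ((Real.pi / R^2 : ℝ) : ℂ).re := by
    simp only [Complex.ofReal_re]; positivity
  have h1 := fourier_gaussian_innerProductSpace (V := EuclideanSpace ℝ (Fin d)) hb z
  rw [Real.fourier_eq'] at h1
  simp only [smul_eq_mul] at h1
  rw [h1]
  have hfr : (Module.finrank ℝ (EuclideanSpace ℝ (Fin d)) : ℂ) = (d : ℂ) := by
    rw [finrank_euclideanSpace_fin]
  have hbase : ((Real.pi : ℂ) / ((Real.pi / R^2 : ℝ) : ℂ)) = ((R^2 : ℝ) : ℂ) := by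
    rw [← Complex.ofReal_div]
    congr 1
    field_simp
  rw [hbase, hfr]
  have hpow : ((R^2 : ℝ) : ℂ) ^ ((d : ℂ) / 2) = ((R ^ (d:ℝ) : ℝ) : ℂ) := by
    have h2 : ((R^2 : ℝ) ^ ((d:ℝ)/2) : ℝ) = R ^ (d:ℝ) := by
      rw [← Real.rpow_natCast R 2, ← Real.rpow_mul hR0.le]
      congr 1
      ring
    rw [← h2, Complex.ofReal_cpow (by positivity)]
    push_cast
    ring_nf
  have hexp : Complex.exp (-(Real.pi:ℂ)^2 * (‖z‖:ℂ)^2 / ((Real.pi / R^2 : ℝ):ℂ)) =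
      ((Real.exp (-(Real.pi * R^2) * ‖z‖^2) : ℝ) : ℂ) := by
    have harg : (-(Real.pi:ℂ)^2 * (‖z‖:ℂ)^2 / ((Real.pi / R^2 : ℝ):ℂ))
        = ((-(Real.pi * R^2) * ‖z‖^2 : ℝ) : ℂ) := by
      have hπ : (Real.pi : ℂ) ≠ 0 := Complex.ofReal_ne_zero.2 Real.pi_ne_zero
      have hR : (R : ℂ) ≠ 0 := Complex.ofReal_ne_zero.2 hR0.ne'
      push_cast
      field_simp
    rw [harg, Complex.ofReal_exp]
  rw [hpow, hexp, ← Complex.ofReal_mul]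

lemma gauss_int (d : ℕ) {b : ℝ} (hb : 0 < b) :
    Integrable (fun ξ : EuclideanSpace ℝ (Fin d) => Real.exp (-b * ‖ξ‖^2)) := by
  have hb' : 0 < ((b:ℝ) : ℂ).re := by simpa using hb
  have h := (GaussianFourier.integrable_cexp_neg_mul_sq_norm_add (V := EuclideanSpace ℝ (Fin d)) hb' 0
    (0 : EuclideanSpace ℝ (Fin d))).norm
  refine h.congr (Filter.Eventually.of_forall fun ξ => ?_)
  have harg : (-((b:ℝ):ℂ) * (‖ξ‖:ℂ)^2 + 0 * ((inner ℝ (0:EuclideanSpace ℝ (Fin d)) ξ : ℝ):ℂ))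
      = ((-b * ‖ξ‖^2 : ℝ) : ℂ) := by push_cast; ring
  simp only []
  rw [harg, Complex.norm_exp, Complex.ofReal_re]

lemma main_identity (d : ℕ) (μ : Measure (EuclideanSpace ℝ (Fin d))) [IsProbabilityMeasure μ]
    {f : EuclideanSpace ℝ (Fin d) → ℂ} (hfm : Measurable f) (hfi : Integrable f μ)
    (R : ℝ) (hR0 : 0 < R) :
    (↑(∫ ξ : EuclideanSpace ℝ (Fin d), ‖ftM μ f ξ‖^2 * Real.exp (-(Real.pi/R^2) * ‖ξ‖^2)) : ℂ)
      = ∫ p : (EuclideanSpace ℝ (Fin d)) × (EuclideanSpace ℝ (Fin d)),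
          f p.1 * (starRingEnd ℂ) (f p.2) *
            ((R ^ (d:ℝ) * Real.exp (-(Real.pi * R^2) * ‖p.1 - p.2‖^2) : ℝ) : ℂ) ∂(μ.prod μ) := by
  have hπR : 0 < Real.pi / R^2 := by positivity
  set w : EuclideanSpace ℝ (Fin d) → ℝ := fun ξ => Real.exp (-(Real.pi/R^2) * ‖ξ‖^2) with hw_def
  have hw_int : Integrable w := gauss_int d hπR
  have hw_nn : ∀ ξ, 0 ≤ w ξ := fun ξ => (Real.exp_pos _).le
  set F : EuclideanSpace ℝ (Fin d) → (EuclideanSpace ℝ (Fin d)) × (EuclideanSpace ℝ (Fin d)) → ℂ :=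
    fun ξ p => (ePi (-⟪p.1, ξ⟫) * f p.1) * (ePi (⟪p.2, ξ⟫) * (starRingEnd ℂ) (f p.2)) * ((w ξ : ℝ) : ℂ)
    with hF_def
  have step1 : ∀ ξ, ((‖ftM μ f ξ‖^2 * w ξ : ℝ) : ℂ) = ∫ p, F ξ p ∂(μ.prod μ) := by
    intro ξ
    have hconj : (starRingEnd ℂ) (ftM μ f ξ) = ∫ y, ePi (⟪y, ξ⟫) * (starRingEnd ℂ) (f y) ∂μ := by
      rw [ftM, ← integral_conj]
      refine integral_congr_ae (Filter.Eventually.of_forall fun y => ?_)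
      simp only [_root_.map_mul, ePi_conj, neg_neg]
    have hsq : ((‖ftM μ f ξ‖^2 : ℝ) : ℂ) = ftM μ f ξ * (starRingEnd ℂ) (ftM μ f ξ) := by
      rw [Complex.mul_conj]
      norm_cast
      rw [Complex.normSq_eq_norm_sq]
    rw [Complex.ofReal_mul, hsq, hconj]
    nth_rewrite 1 [ftM]
    rw [← integral_prod_mul, ← MeasureTheory.integral_mul_const]
  have hFmeas : AEStronglyMeasurable (Function.uncurry F) (volume.prod (μ.prod μ)) := by
    have h1 : Continuous fun q : EuclideanSpace ℝ (Fin d) ×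
        (EuclideanSpace ℝ (Fin d) × EuclideanSpace ℝ (Fin d)) => ePi (-⟪q.2.1, q.1⟫) :=
      ePi_continuous.comp ((continuous_inner.comp
        ((continuous_fst.comp continuous_snd).prodMk continuous_fst)).neg)
    have h2 : Continuous fun q : EuclideanSpace ℝ (Fin d) ×
        (EuclideanSpace ℝ (Fin d) × EuclideanSpace ℝ (Fin d)) => ePi (⟪q.2.2, q.1⟫) :=
      ePi_continuous.comp (continuous_inner.comp
        ((continuous_snd.comp continuous_snd).prodMk continuous_fst))
    have h3 : Continuous fun q : EuclideanSpace ℝ (Fin d) ×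
        (EuclideanSpace ℝ (Fin d) × EuclideanSpace ℝ (Fin d)) => ((w q.1 : ℝ) : ℂ) :=
      Complex.continuous_ofReal.comp (Real.continuous_exp.comp
        (continuous_const.mul ((continuous_fst.norm).pow 2)))
    have h4 : Measurable fun q : EuclideanSpace ℝ (Fin d) ×
        (EuclideanSpace ℝ (Fin d) × EuclideanSpace ℝ (Fin d)) => f q.2.1 :=
      hfm.comp (measurable_fst.comp measurable_snd)
    have h5 : Measurable fun q : EuclideanSpace ℝ (Fin d) ×
        (EuclideanSpace ℝ (Fin d) × EuclideanSpace ℝ (Fin d)) => (starRingEnd ℂ) (f q.2.2) := by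
      simp only [starRingEnd_apply]
      exact continuous_star.measurable.comp (hfm.comp (measurable_snd.comp measurable_snd))
    exact (((h1.measurable.mul h4).mul (h2.measurable.mul h5)).mul
      h3.measurable).aestronglyMeasurable
  have hbound : Integrable (fun q : EuclideanSpace ℝ (Fin d) ×
      (EuclideanSpace ℝ (Fin d) × EuclideanSpace ℝ (Fin d)) =>
      w q.1 * (‖f q.2.1‖ * ‖f q.2.2‖)) (volume.prod (μ.prod μ)) :=
    hw_int.mul_prod (hfi.norm.mul_prod hfi.norm)
  have hFint : Integrable (Function.uncurry F) (volume.prod (μ.prod μ)) := by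
    refine hbound.mono' hFmeas (Filter.Eventually.of_forall fun q => ?_)
    have : ‖Function.uncurry F q‖ = w q.1 * (‖f q.2.1‖ * ‖f q.2.2‖) := by
      simp only [Function.uncurry, hF_def, norm_mul, ePi_norm, one_mul, RCLike.norm_conj,
        Complex.norm_real, Real.norm_eq_abs, abs_of_nonneg (hw_nn _)]
      ring
    exact le_of_eq this
  calc (↑(∫ ξ : EuclideanSpace ℝ (Fin d), ‖ftM μ f ξ‖^2 * w ξ) : ℂ)
      = ∫ ξ : EuclideanSpace ℝ (Fin d), ((‖ftM μ f ξ‖^2 * w ξ : ℝ) : ℂ) := integral_ofReal.symm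
    _ = ∫ ξ : EuclideanSpace ℝ (Fin d), ∫ p, F ξ p ∂(μ.prod μ) :=
        integral_congr_ae (Filter.Eventually.of_forall fun ξ => step1 ξ)
    _ = ∫ p, (∫ ξ : EuclideanSpace ℝ (Fin d), F ξ p) ∂(μ.prod μ) := integral_integral_swap hFint
    _ = ∫ p : (EuclideanSpace ℝ (Fin d)) × (EuclideanSpace ℝ (Fin d)),
          f p.1 * (starRingEnd ℂ) (f p.2) *
            ((R ^ (d:ℝ) * Real.exp (-(Real.pi * R^2) * ‖p.1 - p.2‖^2) : ℝ) : ℂ) ∂(μ.prod μ) := by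
        refine integral_congr_ae (Filter.Eventually.of_forall fun p => ?_)
        have hexp : ∀ ξ : EuclideanSpace ℝ (Fin d),
            2*(Real.pi:ℂ)*Complex.I*((-⟪p.1,ξ⟫ : ℝ) : ℂ) + 2*(Real.pi:ℂ)*Complex.I*((⟪p.2,ξ⟫ : ℝ) : ℂ)
              = ((-2*Real.pi*⟪ξ, p.1 - p.2⟫ : ℝ) : ℂ) * Complex.I := by
          intro ξ
          have h6 : ⟪ξ, p.1 - p.2⟫ = ⟪p.1,ξ⟫ - ⟪p.2,ξ⟫ := by
            rw [inner_sub_right, real_inner_comm ξ p.1, real_inner_comm ξ p.2]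
          rw [h6]
          push_cast
          ring
        have hpt : ∀ ξ : EuclideanSpace ℝ (Fin d), F ξ p =
            (f p.1 * (starRingEnd ℂ) (f p.2)) *
              (Complex.exp (((-2 * Real.pi * ⟪ξ, p.1 - p.2⟫ : ℝ):ℂ) * Complex.I) *
               Complex.exp (-((Real.pi / R^2 : ℝ):ℂ) * (‖ξ‖:ℂ)^2)) := by
          intro ξ
          have hcast : ((w ξ : ℝ) : ℂ) = Complex.exp (-((Real.pi/R^2 : ℝ):ℂ) * (‖ξ‖:ℂ)^2) := by
            rw [hw_def]
            simp only []
            rw [Complex.ofReal_exp]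
            congr 1
            push_cast
            ring
          rw [hF_def]
          simp only []
          rw [hcast, ePi, ePi, ← hexp ξ, Complex.exp_add]
          ring
        simp only [hpt]
        rw [MeasureTheory.integral_const_mul, gauss_ft d R hR0 (p.1 - p.2)]

lemma weighted_bound (d : ℕ) (s : ℝ) (hs0 : 0 < s)
    (μ : Measure (EuclideanSpace ℝ (Fin d))) [IsProbabilityMeasure μ]
    (C : ℝ) (hC : 0 < C)
    (hfr : ∀ (x : EuclideanSpace ℝ (Fin d)) (r : ℝ), 0 < r →
      (μ (closedBall x r)).toReal ≤ C * r ^ s)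
    {f : EuclideanSpace ℝ (Fin d) → ℂ} (hfm : Measurable f) (hf2 : MemLp f 2 μ)
    (R : ℝ) (hR : 1 ≤ R) :
    ∫ ξ : EuclideanSpace ℝ (Fin d), ‖ftM μ f ξ‖^2 * Real.exp (-(Real.pi/R^2) * ‖ξ‖^2)
      ≤ (2 * C * s^(s/2)) * R^((d:ℝ) - s) * ∫ x, ‖f x‖^2 ∂μ := by
  have hR0 : (0:ℝ) < R := lt_of_lt_of_le one_pos hR
  have hfi : Integrable f μ := hf2.integrable one_le_two
  have hfsq : Integrable (fun x => ‖f x‖^2) μ := by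
    have h := hf2.integrable_norm_rpow (by norm_num) (by norm_num)
    refine h.congr (Filter.Eventually.of_forall fun x => ?_)
    simp only [ENNReal.toReal_ofNat]
    rw [← Real.rpow_natCast (‖f x‖) 2]
    norm_num
  set G : EuclideanSpace ℝ (Fin d) → ℝ :=
    fun z => R^(d:ℝ) * Real.exp (-(Real.pi*R^2) * ‖z‖^2) with hG_def
  have hG_nn : ∀ z, 0 ≤ G z := fun z => by positivity
  have hG_le : ∀ z, G z ≤ R^(d:ℝ) := by
    intro z
    rw [hG_def]
    simp only []
    nth_rewrite 2 [← mul_one (R^(d:ℝ))]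
    refine mul_le_mul_of_nonneg_left (Real.exp_le_one_iff.2 ?_) (by positivity)
    have : (0:ℝ) ≤ (Real.pi * R^2) * ‖z‖^2 := by positivity
    linarith
  have hG_cont : Continuous G :=
    continuous_const.mul (Real.continuous_exp.comp (continuous_const.mul (continuous_norm.pow 2)))
  have hker : ∀ x, ∫ y, G (x - y) ∂μ ≤ (2*C*s^(s/2)) * R^((d:ℝ)-s) := by
    intro x
    have h1 : ∫ y, G (x - y) ∂μ
        = R^(d:ℝ) * ∫ y, Real.exp (-(Real.pi*R^2) * ‖x-y‖^2) ∂μ := by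
      rw [hG_def]
      simp only []
      rw [MeasureTheory.integral_const_mul]
    rw [h1]
    calc R^(d:ℝ) * ∫ y, Real.exp (-(Real.pi*R^2) * ‖x-y‖^2) ∂μ
        ≤ R^(d:ℝ) * ((2*C*s^(s/2)) * R^(-s)) :=
          mul_le_mul_of_nonneg_left (kernel_bound d s hs0 μ C hC hfr R hR x) (by positivity)
      _ = (2*C*s^(s/2)) * R^((d:ℝ)-s) := by
          rw [show (d:ℝ) - s = (d:ℝ) + (-s) by ring, Real.rpow_add hR0]
          ring
  have hG2meas : Continuous fun p : EuclideanSpace ℝ (Fin d) × EuclideanSpace ℝ (Fin d) =>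
      G (p.1 - p.2) := hG_cont.comp (continuous_fst.sub continuous_snd)
  have hJ1int : Integrable (fun p : EuclideanSpace ℝ (Fin d) × EuclideanSpace ℝ (Fin d) =>
      ‖f p.1‖^2 * G (p.1 - p.2)) (μ.prod μ) := by
    have hb : Integrable (fun p : EuclideanSpace ℝ (Fin d) × EuclideanSpace ℝ (Fin d) =>
        ‖f p.1‖^2 * (1:ℝ)) (μ.prod μ) := hfsq.mul_prod (integrable_const 1)
    have hb' : Integrable (fun p : EuclideanSpace ℝ (Fin d) × EuclideanSpace ℝ (Fin d) =>
        ‖f p.1‖^2) (μ.prod μ) := by simpa using hb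
    have h2 := hb'.bdd_mul hG2meas.aestronglyMeasurable
      (Filter.Eventually.of_forall fun p => by rw [Real.norm_eq_abs, abs_of_nonneg (hG_nn _)]; exact hG_le _)
    refine h2.congr (Filter.Eventually.of_forall fun p => mul_comm _ _)
  have hJ2int : Integrable (fun p : EuclideanSpace ℝ (Fin d) × EuclideanSpace ℝ (Fin d) =>
      ‖f p.2‖^2 * G (p.1 - p.2)) (μ.prod μ) := by
    have hb : Integrable (fun p : EuclideanSpace ℝ (Fin d) × EuclideanSpace ℝ (Fin d) =>
        (1:ℝ) * ‖f p.2‖^2) (μ.prod μ) := (integrable_const 1).mul_prod hfsq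
    have hb' : Integrable (fun p : EuclideanSpace ℝ (Fin d) × EuclideanSpace ℝ (Fin d) =>
        ‖f p.2‖^2) (μ.prod μ) := by simpa using hb
    have h2 := hb'.bdd_mul hG2meas.aestronglyMeasurable
      (Filter.Eventually.of_forall fun p => by rw [Real.norm_eq_abs, abs_of_nonneg (hG_nn _)]; exact hG_le _)
    refine h2.congr (Filter.Eventually.of_forall fun p => mul_comm _ _)
  have hid := main_identity d μ hfm hfi R hR0
  have hre : ∫ ξ : EuclideanSpace ℝ (Fin d), ‖ftM μ f ξ‖^2 * Real.exp (-(Real.pi/R^2) * ‖ξ‖^2)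
      = (∫ p : (EuclideanSpace ℝ (Fin d)) × (EuclideanSpace ℝ (Fin d)),
          f p.1 * (starRingEnd ℂ) (f p.2) * ((G (p.1 - p.2) : ℝ) : ℂ) ∂(μ.prod μ)).re := by
    rw [hG_def]
    simp only []
    rw [← hid, Complex.ofReal_re]
  rw [hre]
  have hstep1 : (∫ p : (EuclideanSpace ℝ (Fin d)) × (EuclideanSpace ℝ (Fin d)),
      f p.1 * (starRingEnd ℂ) (f p.2) * ((G (p.1 - p.2) : ℝ) : ℂ) ∂(μ.prod μ)).re
      ≤ ∫ p : (EuclideanSpace ℝ (Fin d)) × (EuclideanSpace ℝ (Fin d)),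
          ‖f p.1‖ * ‖f p.2‖ * G (p.1 - p.2) ∂(μ.prod μ) := by
    refine (Complex.re_le_norm _).trans ?_
    refine (norm_integral_le_integral_norm _).trans_eq ?_
    refine integral_congr_ae (Filter.Eventually.of_forall fun p => ?_)
    simp only [norm_mul, RCLike.norm_conj, Complex.norm_real, Real.norm_eq_abs,
      abs_of_nonneg (hG_nn _)]
  have hsymm : ∫ p : (EuclideanSpace ℝ (Fin d)) × (EuclideanSpace ℝ (Fin d)),
      ‖f p.2‖^2 * G (p.1 - p.2) ∂(μ.prod μ)
      = ∫ p : (EuclideanSpace ℝ (Fin d)) × (EuclideanSpace ℝ (Fin d)),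
          ‖f p.1‖^2 * G (p.1 - p.2) ∂(μ.prod μ) := by
    rw [← MeasureTheory.integral_prod_swap]
    refine integral_congr_ae (Filter.Eventually.of_forall fun p => ?_)
    simp only [Prod.fst_swap, Prod.snd_swap]
    rw [show p.2 - p.1 = -(p.1 - p.2) from (neg_sub _ _).symm, hG_def]
    simp only [norm_neg]
  have hstep2 : ∫ p : (EuclideanSpace ℝ (Fin d)) × (EuclideanSpace ℝ (Fin d)),
      ‖f p.1‖ * ‖f p.2‖ * G (p.1 - p.2) ∂(μ.prod μ)
      ≤ ∫ p : (EuclideanSpace ℝ (Fin d)) × (EuclideanSpace ℝ (Fin d)),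
          ‖f p.1‖^2 * G (p.1 - p.2) ∂(μ.prod μ) := by
    calc ∫ p : (EuclideanSpace ℝ (Fin d)) × (EuclideanSpace ℝ (Fin d)),
        ‖f p.1‖ * ‖f p.2‖ * G (p.1 - p.2) ∂(μ.prod μ)
        ≤ ∫ p : (EuclideanSpace ℝ (Fin d)) × (EuclideanSpace ℝ (Fin d)),
            (‖f p.1‖^2 * G (p.1 - p.2) + ‖f p.2‖^2 * G (p.1 - p.2))/2 ∂(μ.prod μ) := by
          refine integral_mono_of_nonneg ?_ ((hJ1int.add hJ2int).div_const 2) ?_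
          · exact Filter.Eventually.of_forall fun p => by positivity
          · refine Filter.Eventually.of_forall fun p => ?_
            have h3 := hG_nn (p.1 - p.2)
            nlinarith [sq_nonneg (‖f p.1‖ - ‖f p.2‖), norm_nonneg (f p.1), norm_nonneg (f p.2),
              mul_nonneg (mul_nonneg (norm_nonneg (f p.1)) (norm_nonneg (f p.2))) h3]
      _ = ∫ p : (EuclideanSpace ℝ (Fin d)) × (EuclideanSpace ℝ (Fin d)),
            ‖f p.1‖^2 * G (p.1 - p.2) ∂(μ.prod μ) := by
          rw [integral_div, integral_add hJ1int hJ2int, hsymm]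
          ring
  have hstep3 : ∫ p : (EuclideanSpace ℝ (Fin d)) × (EuclideanSpace ℝ (Fin d)),
      ‖f p.1‖^2 * G (p.1 - p.2) ∂(μ.prod μ)
      ≤ (2*C*s^(s/2)) * R^((d:ℝ)-s) * ∫ x, ‖f x‖^2 ∂μ := by
    rw [MeasureTheory.integral_prod _ hJ1int]
    calc ∫ x, ∫ y, ‖f x‖^2 * G (x - y) ∂μ ∂μ
        ≤ ∫ x, ‖f x‖^2 * ((2*C*s^(s/2)) * R^((d:ℝ)-s)) ∂μ := by
          refine integral_mono_of_nonneg ?_ (hfsq.mul_const _) ?_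
          · exact Filter.Eventually.of_forall fun x =>
              integral_nonneg fun y => mul_nonneg (by positivity) (hG_nn _)
          · refine Filter.Eventually.of_forall fun x => ?_
            simp only []
            rw [MeasureTheory.integral_const_mul]
            exact mul_le_mul_of_nonneg_left (hker x) (by positivity)
      _ = (2*C*s^(s/2)) * R^((d:ℝ)-s) * ∫ x, ‖f x‖^2 ∂μ := by
          rw [MeasureTheory.integral_mul_const]
          ring
  exact hstep1.trans (hstep2.trans hstep3)


/-- Restriction lemma for Frostman measures: `∫_{|ξ|≤R} |\widehat{f dμ}|² ≲ R^{d-s} ‖f‖²_{L²(μ)}`. -/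
theorem stmt0 (d : ℕ) (hd : 1 ≤ d) (s : ℝ) (hs0 : 0 < s) (hsd : s ≤ d)
    (μ : Measure (EuclideanSpace ℝ (Fin d))) [IsProbabilityMeasure μ]
    (K : Set (EuclideanSpace ℝ (Fin d))) (hK : IsCompact K) (hμK : μ Kᶜ = 0)
    (C : ℝ) (hC : 0 < C)
    (hfr : ∀ (x : EuclideanSpace ℝ (Fin d)) (r : ℝ), 0 < r →
      (μ (closedBall x r)).toReal ≤ C * r ^ s) :
    ∃ A : ℝ, 0 < A ∧ ∀ f : EuclideanSpace ℝ (Fin d) → ℂ, MemLp f 2 μ →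
      ∀ R : ℝ, 1 ≤ R →
      ∫ ξ in closedBall (0 : EuclideanSpace ℝ (Fin d)) R, ‖ftM μ f ξ‖ ^ 2 ≤
        A * R ^ ((d : ℝ) - s) * ∫ x, ‖f x‖ ^ 2 ∂μ := by
  refine ⟨Real.exp Real.pi * (2 * C * s^(s/2)), by positivity, ?_⟩
  intro f hf R hR
  have hR0 : (0:ℝ) < R := lt_of_lt_of_le one_pos hR
  obtain ⟨g, hgsm, hfg⟩ : ∃ g, StronglyMeasurable g ∧ f =ᵐ[μ] g :=
    ⟨hf.aestronglyMeasurable.mk f, hf.aestronglyMeasurable.stronglyMeasurable_mk,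
      hf.aestronglyMeasurable.ae_eq_mk⟩
  have hgm : Measurable g := hgsm.measurable
  have hg2 : MemLp g 2 μ := hf.ae_eq hfg
  have hftm_eq : ftM μ f = ftM μ g := by
    funext ξ
    exact integral_congr_ae (hfg.mono fun x hx => by simp only [hx])
  have hsq_eq : ∫ x, ‖f x‖^2 ∂μ = ∫ x, ‖g x‖^2 ∂μ :=
    integral_congr_ae (hfg.mono fun x hx => by simp only [hx])
  rw [hftm_eq, hsq_eq]
  have hgi : Integrable g μ := hg2.integrable one_le_two
  set w : EuclideanSpace ℝ (Fin d) → ℝ := fun ξ => Real.exp (-(Real.pi/R^2) * ‖ξ‖^2) with hw_def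
  have hw_int : Integrable w := gauss_int d (by positivity)
  set M : ℝ := ∫ x, ‖g x‖ ∂μ with hM_def
  have hM_nn : 0 ≤ M := integral_nonneg fun x => norm_nonneg _
  have hft_cont : Continuous (ftM μ g) := ftM_continuous μ hgi
  have hWint : Integrable (fun ξ => ‖ftM μ g ξ‖^2 * w ξ) volume := by
    refine (hw_int.const_mul (M^2)).mono' ?_ ?_
    · exact ((hft_cont.norm.pow 2).mul
        (Real.continuous_exp.comp (continuous_const.mul (continuous_norm.pow 2)))).aestronglyMeasurable
    · refine Filter.Eventually.of_forall fun ξ => ?_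
      rw [Real.norm_eq_abs, abs_of_nonneg (by positivity)]
      refine mul_le_mul_of_nonneg_right ?_ (Real.exp_pos _).le
      have h4 := ftM_norm_le μ g ξ
      nlinarith [norm_nonneg (ftM μ g ξ)]
  have hWnn : ∀ ξ, 0 ≤ ‖ftM μ g ξ‖^2 * w ξ := fun ξ => by positivity
  have hball : ∫ ξ in closedBall (0 : EuclideanSpace ℝ (Fin d)) R, ‖ftM μ g ξ‖ ^ 2
      ≤ Real.exp Real.pi * ∫ ξ, ‖ftM μ g ξ‖^2 * w ξ := by
    have h1 : ∫ ξ in closedBall (0 : EuclideanSpace ℝ (Fin d)) R, ‖ftM μ g ξ‖ ^ 2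
        ≤ ∫ ξ in closedBall (0 : EuclideanSpace ℝ (Fin d)) R,
            Real.exp Real.pi * (‖ftM μ g ξ‖^2 * w ξ) := by
      refine setIntegral_mono_on ?_ ?_ measurableSet_closedBall ?_
      · exact (hft_cont.norm.pow 2).continuousOn.integrableOn_compact (isCompact_closedBall _ _)
      · exact (hWint.const_mul _).integrableOn
      · intro ξ hξ
        have hξR : ‖ξ‖ ≤ R := by
          rw [mem_closedBall, dist_zero_right] at hξ; exact hξ
        have h2 : (Real.pi/R^2) * ‖ξ‖^2 ≤ Real.pi := by
          rw [div_mul_eq_mul_div, div_le_iff₀ (by positivity)]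
          have h5 : ‖ξ‖^2 ≤ R^2 := by nlinarith [norm_nonneg ξ]
          nlinarith [Real.pi_pos]
        have hwge : Real.exp (-Real.pi) ≤ w ξ := by
          rw [hw_def]
          apply Real.exp_le_exp.2
          linarith
        have h3 : 1 ≤ Real.exp Real.pi * w ξ := by
          have h6 := mul_le_mul_of_nonneg_left hwge (Real.exp_pos Real.pi).le
          rwa [← Real.exp_add, add_neg_cancel, Real.exp_zero] at h6
        nlinarith [sq_nonneg ‖ftM μ g ξ‖, mul_nonneg (sq_nonneg ‖ftM μ g ξ‖) (Real.exp_pos (-(Real.pi/R^2) * ‖ξ‖^2)).le]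
    refine h1.trans ?_
    rw [MeasureTheory.integral_const_mul]
    exact mul_le_mul_of_nonneg_left
      (setIntegral_le_integral hWint (Filter.Eventually.of_forall hWnn)) (Real.exp_pos _).le
  calc ∫ ξ in closedBall (0 : EuclideanSpace ℝ (Fin d)) R, ‖ftM μ g ξ‖ ^ 2
      ≤ Real.exp Real.pi * ∫ ξ, ‖ftM μ g ξ‖^2 * w ξ := hball
    _ ≤ Real.exp Real.pi * ((2 * C * s^(s/2)) * R^((d:ℝ) - s) * ∫ x, ‖g x‖^2 ∂μ) :=
        mul_le_mul_of_nonneg_left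
          (weighted_bound d s hs0 μ C hC hfr hgm hg2 R hR) (Real.exp_pos _).le
    _ = Real.exp Real.pi * (2 * C * s^(s/2)) * R^((d:ℝ) - s) * ∫ x, ‖g x‖^2 ∂μ := by ring
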